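/- Let φ be a 3-CNF formula with m ≥ 2 clauses over n ≥ 4 variables, each clause containing exactly three literals on three pairwise distinct variables, and every variable occurring (in some polarity) in at least one clause. If G(φ) admits a strong conflict-free vertex-connection 3-coloring, then φ has a satisfying truth assignment. -/

import Mathlib

open SimpleGraph

/-- Vertices of the graph `G(φ)`: four special vertices `a, b, c, d`, a literal vertex
`lit x s` for each variable `x` and polarity `s` (`lit x true = v_x`,
`lit x false = v_x̄`), and for each clause `j` the triangle `cl j, cla j, clb j`. -/
inductive GV (n m : ℕ) where
  | a | b | c | d
  | lit : Fin n → Bool → GV n m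
  | cl : Fin m → GV n m
  | cla : Fin m → GV n m
  | clb : Fin m → GV n m
deriving DecidableEq

/-- The graph `G(φ)` built from a 3-CNF formula `φ` whose `j`-th clause consists of the
three literals `Cl j 0, Cl j 1, Cl j 2` (a literal being a pair of a variable and a
polarity). -/
def Gphi {n m : ℕ} (Cl : Fin m → Fin 3 → Fin n × Bool) : SimpleGraph (GV n m) :=
  SimpleGraph.fromRel (fun x y =>
    match x, y with
    | .a, .b => True
    | .a, .c => True
    | .a, .d => True
    | .b, .d => True
    | .c, .d => True
    | .lit x s, .lit x' s' => x = x' ∧ s ≠ s'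
    | .a, .lit _ _ => True
    | .cl j, .cla j' => j = j'
    | .cl j, .clb j' => j = j'
    | .cla j, .clb j' => j = j'
    | .cl j, .lit x s => ∃ t, Cl j t = (x, s)
    | .c, .cl _ => True
    | .a, .cla _ => True
    | .b, .clb _ => True
    | _, _ => False)

/-- `f` is a strong conflict-free vertex-connection coloring of `G`: any two distinct
vertices are joined by a shortest path on which some color occurs exactly once. -/
def IsSCFVC {V α : Type*} [DecidableEq α] (G : SimpleGraph V) (f : V → α) : Prop :=
  ∀ u v : V, u ≠ v → ∃ p : G.Walk u v, p.length = G.dist u v ∧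
    ∃ c : α, (p.support.map f).count c = 1

lemma nbr_lit {n m : ℕ} {Cl : Fin m → Fin 3 → Fin n × Bool} {x : Fin n} {s : Bool}
    {w : GV n m} (h : (Gphi Cl).Adj (.lit x s) w) :
    w = .a ∨ (∃ s', w = .lit x s') ∨ (∃ j t, Cl j t = (x, s) ∧ w = .cl j) := by
  cases w <;> simp [Gphi, fromRel_adj] at h ⊢
  · rcases h.2 with ⟨rfl, -⟩ | ⟨rfl, -⟩ <;> rfl
  · exact h

lemma nbr_clb {n m : ℕ} {Cl : Fin m → Fin 3 → Fin n × Bool} {j : Fin m}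
    {w : GV n m} (h : (Gphi Cl).Adj w (.clb j)) :
    w = .b ∨ w = .cl j ∨ w = .cla j := by
  cases w <;> simp [Gphi, fromRel_adj] at h ⊢ <;> tauto

lemma nbr_cl {n m : ℕ} {Cl : Fin m → Fin 3 → Fin n × Bool} {j : Fin m}
    {w : GV n m} (h : (Gphi Cl).Adj w (.cl j)) :
    w = .c ∨ w = .cla j ∨ w = .clb j ∨ (∃ y t t', Cl j t' = (y, t) ∧ w = .lit y t) := by
  cases w <;> simp [Gphi, fromRel_adj] at h ⊢ <;> try tauto

lemma count_abab {α : Type*} [DecidableEq α] (x y c : α) :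
    ([x, y, x, y] : List α).count c ≠ 1 := by
  by_cases hx : x = c <;> by_cases hy : y = c <;>
    simp [List.count_cons, hx, hy]

lemma scfvc_proper {V α : Type*} [DecidableEq α] {G : SimpleGraph V} {f : V → α}
    (hf : IsSCFVC G f) {u v : V} (h : G.Adj u v) : f u ≠ f v := by
  obtain ⟨p, hl, c, hc⟩ := hf u v h.ne
  have hd : G.dist u v ≤ 1 := by
    simpa using G.dist_le (Walk.cons h Walk.nil)
  have hle : p.length ≤ 1 := hl ▸ hd
  cases p with
  | nil => exact absurd h (G.irrefl)
  | cons h' q =>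
    cases q with
    | nil =>
      intro heq
      simp only [Walk.support_cons, Walk.support_nil, List.map_cons, List.map_nil] at hc
      by_cases hv : f v = c
      · rw [heq, hv] at hc; simp [List.count_cons] at hc
      · rw [heq] at hc; simp [List.count_cons, hv] at hc
    | cons h'' q' => simp [Walk.length_cons] at hle

set_option synthInstance.maxSize 512 in
lemma fin3_bc : ∀ A B C D : Fin 3,
    A ≠ B → A ≠ C → A ≠ D → B ≠ D → C ≠ D → B = C := by decide

set_option synthInstance.maxSize 512 in
lemma fin3_tri : ∀ A B D p q r : Fin 3,
    A ≠ B → A ≠ D → B ≠ D → p ≠ q → q ≠ r → p ≠ r → A ≠ q → B ≠ p → B ≠ r →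
      q = B ∧ ((p = A ∧ r = D) ∨ (p = D ∧ r = A)) := by decide

set_option synthInstance.maxSize 512 in
lemma fin3_oneB : ∀ A B D u v : Fin 3,
    A ≠ B → A ≠ D → B ≠ D → u ≠ A → v ≠ A → u ≠ v → u = B ∨ v = B := by decide

set_option synthInstance.maxSize 512 in
lemma fin3_third : ∀ A B D e : Fin 3,
    A ≠ B → A ≠ D → B ≠ D → e ≠ A → e ≠ B → e = D := by decide

/-- If `G(φ)` admits a strong conflict-free vertex-connection `3`-coloring, where `φ` is a
3-CNF formula with `m ≥ 2` clauses over `n ≥ 4` variables, each clause on three pairwise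
distinct variables, every variable occurring in some clause, then `φ` has a satisfying
truth assignment. -/
theorem stmt13 {n m : ℕ} (hm : 2 ≤ m) (hn : 4 ≤ n)
    (Cl : Fin m → Fin 3 → Fin n × Bool)
    (hdistinct : ∀ j, ∀ t t' : Fin 3, t ≠ t' → (Cl j t).1 ≠ (Cl j t').1)
    (hoccur : ∀ x : Fin n, ∃ j t, (Cl j t).1 = x)
    (hcol : ∃ f : GV n m → Fin 3, IsSCFVC (Gphi Cl) f) :
    ∃ σ : Fin n → Bool, ∀ j : Fin m, ∃ t : Fin 3, σ (Cl j t).1 = (Cl j t).2 := by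
  classical
  obtain ⟨f, hf⟩ := hcol
  have prop : ∀ {u v : GV n m}, (Gphi Cl).Adj u v → f u ≠ f v :=
    fun h => scfvc_proper hf h
  -- basic adjacencies
  have adjab : (Gphi Cl).Adj .a .b := by simp [Gphi, fromRel_adj]
  have adjac : (Gphi Cl).Adj .a .c := by simp [Gphi, fromRel_adj]
  have adjad : (Gphi Cl).Adj .a .d := by simp [Gphi, fromRel_adj]
  have adjbd : (Gphi Cl).Adj .b .d := by simp [Gphi, fromRel_adj]
  have adjcd : (Gphi Cl).Adj .c .d := by simp [Gphi, fromRel_adj]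
  have adjalit : ∀ (x : Fin n) (s : Bool), (Gphi Cl).Adj .a (.lit x s) := by
    intro x s; simp [Gphi, fromRel_adj]
  have adjlitlit : ∀ (x : Fin n), (Gphi Cl).Adj (.lit x true) (.lit x false) := by
    intro x; simp [Gphi, fromRel_adj]
  have adjccl : ∀ j, (Gphi Cl).Adj .c (.cl j) := by
    intro j; simp [Gphi, fromRel_adj]
  have adjbclb : ∀ j, (Gphi Cl).Adj .b (.clb j) := by
    intro j; simp [Gphi, fromRel_adj]
  have adjacla : ∀ j, (Gphi Cl).Adj .a (.cla j) := by
    intro j; simp [Gphi, fromRel_adj]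
  have adjclcla : ∀ j, (Gphi Cl).Adj (.cl j) (.cla j) := by
    intro j; simp [Gphi, fromRel_adj]
  have adjclclb : ∀ j, (Gphi Cl).Adj (.cl j) (.clb j) := by
    intro j; simp [Gphi, fromRel_adj]
  have adjclaclb : ∀ j, (Gphi Cl).Adj (.cla j) (.clb j) := by
    intro j; simp [Gphi, fromRel_adj]
  -- color structure on a, b, c, d
  have hAB : f (.a : GV n m) ≠ f .b := prop adjab
  have hAD : f (.a : GV n m) ≠ f .d := prop adjad
  have hBD : f (.b : GV n m) ≠ f .d := prop adjbd
  have hBC : f (.b : GV n m) = f .c :=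
    fin3_bc _ _ _ _ hAB (prop adjac) hAD hBD (prop adjcd)
  have hlitne : ∀ (x : Fin n) (s : Bool), f (.lit x s) ≠ f .a := by
    intro x s; exact (prop (adjalit x s)).symm
  -- each clause triangle is rainbow with cla colored like b
  have htri : ∀ j, f (.cla j) = f .b ∧
      ((f (.cl j) = f .a ∧ f (.clb j) = f .d) ∨
       (f (.cl j) = f .d ∧ f (.clb j) = f .a)) := by
    intro j
    refine fin3_tri (f .a) (f .b) (f .d) _ _ _ hAB hAD hBD
      (prop (adjclcla j)) (prop (adjclaclb j)) (prop (adjclclb j))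
      (prop (adjacla j)) ?_ (prop (adjbclb j))
    rw [hBC]; exact prop (adjccl j)
  -- a variable avoiding clause j, with a polarity colored like b
  have hvar : ∀ j : Fin m, ∃ (x : Fin n) (s : Bool),
      (∀ t : Fin 3, (Cl j t).1 ≠ x) ∧ f (.lit x s) = f .b := by
    intro j
    have hx : ∃ x : Fin n, ∀ t : Fin 3, (Cl j t).1 ≠ x := by
      by_contra hcon
      push_neg at hcon
      have hsurj : Function.Surjective (fun t : Fin 3 => (Cl j t).1) := fun x => hcon x
      have := Fintype.card_le_of_surjective _ hsurj
      simp at this; omega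
    obtain ⟨x, hx⟩ := hx
    rcases fin3_oneB (f .a) (f .b) (f .d) (f (.lit x true)) (f (.lit x false))
        hAB hAD hBD (hlitne x true) (hlitne x false) (prop (adjlitlit x)) with h | h
    · exact ⟨x, true, hx, h⟩
    · exact ⟨x, false, hx, h⟩
  -- Step 4: every clause triangle has f (cl j) = f a and f (clb j) = f d
  have hclause : ∀ j, f (.cl j) = f .a ∧ f (.clb j) = f .d := by
    intro j
    rcases (htri j).2 with h | h
    · exact h
    exfalso
    obtain ⟨hclD, hclbA⟩ := h
    obtain ⟨x, s, hx, hs⟩ := hvar j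
    obtain ⟨p, hl, c, hc⟩ := hf (.lit x s) (.clb j) (fun h => by cases h)
    have hle : p.length ≤ 3 := by
      rw [hl]
      exact le_trans ((Gphi Cl).dist_le
        (Walk.cons (adjalit x s).symm (Walk.cons adjab
          (Walk.cons (adjbclb j) Walk.nil)))) (by simp)
    cases p with
    | cons h₁ q =>
      cases q with
      | nil => simp [Gphi, fromRel_adj] at h₁
      | cons h₂ q =>
        cases q with
        | nil =>
          rcases nbr_clb h₂ with rfl | rfl | rfl
          · simp [Gphi, fromRel_adj] at h₁
          · simp [Gphi, fromRel_adj] at h₁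
            obtain ⟨t, ht⟩ := h₁
            exact hx t (congrArg Prod.fst ht)
          · simp [Gphi, fromRel_adj] at h₁
        | cons h₃ q =>
          cases q with
          | nil =>
            simp only [Walk.support_cons, Walk.support_nil, List.map_cons,
              List.map_nil] at hc
            rcases nbr_clb h₃ with rfl | rfl | rfl <;>
              rcases nbr_lit h₁ with rfl | ⟨s', rfl⟩ | ⟨j', t, ht, rfl⟩
            · rw [hs, hclbA] at hc
              exact count_abab _ _ _ hc
            · simp [Gphi, fromRel_adj] at h₂
            · simp [Gphi, fromRel_adj] at h₂
            · simp [Gphi, fromRel_adj] at h₂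
            · simp [Gphi, fromRel_adj] at h₂
              obtain ⟨t, ht⟩ := h₂
              exact hx t (congrArg Prod.fst ht)
            · simp [Gphi, fromRel_adj] at h₂
            · rw [hs, (htri j).1, hclbA] at hc
              exact count_abab _ _ _ hc
            · simp [Gphi, fromRel_adj] at h₂
            · simp [Gphi, fromRel_adj] at h₂
              subst h₂
              exact hx t (congrArg Prod.fst ht)
          | cons h₄ q =>
            simp only [Walk.length_cons] at hle
            omega
  -- Step 5: every clause contains a literal colored like d
  have hsat : ∀ j : Fin m, ∃ t : Fin 3,
      f (.lit (Cl j t).1 (Cl j t).2) = f .d := by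
    intro j
    obtain ⟨x, s, hx, hs⟩ := hvar j
    have hclj : f (.cl j) = f .a := (hclause j).1
    obtain ⟨p, hl, c, hc⟩ := hf (.lit x s) (.cl j) (fun h => by cases h)
    have hle : p.length ≤ 3 := by
      rw [hl]
      exact le_trans ((Gphi Cl).dist_le
        (Walk.cons (adjalit x s).symm (Walk.cons adjac
          (Walk.cons (adjccl j) Walk.nil)))) (by simp)
    cases p with
    | cons h₁ q =>
      cases q with
      | nil =>
        simp [Gphi, fromRel_adj] at h₁
        obtain ⟨t, ht⟩ := h₁
        exact absurd (congrArg Prod.fst ht) (hx t)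
      | cons h₂ q =>
        cases q with
        | nil =>
          rcases nbr_cl h₂ with rfl | rfl | rfl | ⟨y, t, t', hyt, rfl⟩
          · simp [Gphi, fromRel_adj] at h₁
          · simp [Gphi, fromRel_adj] at h₁
          · simp [Gphi, fromRel_adj] at h₁
          · rcases nbr_lit h₁ with h | ⟨s', heq⟩ | ⟨j', t'', ht'', heq⟩
            · cases h
            · injection heq with h1 h2
              subst h1
              exact absurd (congrArg Prod.fst hyt) (hx t')
            · cases heq
        | cons h₃ q =>
          cases q with
          | nil =>
            simp only [Walk.support_cons, Walk.support_nil, List.map_cons,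
              List.map_nil] at hc
            rcases nbr_cl h₃ with rfl | rfl | rfl | ⟨y, t, t', hyt, rfl⟩ <;>
              rcases nbr_lit h₁ with rfl | ⟨s', rfl⟩ | ⟨j', t'', ht'', rfl⟩
            · rw [hs, ← hBC, hclj] at hc
              exact absurd hc (count_abab _ _ _)
            · simp [Gphi, fromRel_adj] at h₂
            · rw [hs, (hclause j').1, ← hBC, hclj] at hc
              exact absurd hc (count_abab _ _ _)
            · rw [hs, (htri j).1, hclj] at hc
              exact absurd hc (count_abab _ _ _)
            · simp [Gphi, fromRel_adj] at h₂
            · simp [Gphi, fromRel_adj] at h₂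
              subst h₂
              exact absurd (congrArg Prod.fst ht'') (hx t'')
            · simp [Gphi, fromRel_adj] at h₂
            · simp [Gphi, fromRel_adj] at h₂
            · simp [Gphi, fromRel_adj] at h₂
              subst h₂
              exact absurd (congrArg Prod.fst ht'') (hx t'')
            · -- w1 = a, w2 = lit y t ∈ clause j : the good case
              by_cases hyB : f (.lit y t) = f .b
              · rw [hs, hyB, hclj] at hc
                exact absurd hc (count_abab _ _ _)
              · refine ⟨t', ?_⟩
                rw [hyt]
                exact fin3_third (f .a) (f .b) (f .d) _ hAB hAD hBD (hlitne y t) hyB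
            · -- w1 = lit x s', w2 = lit y t
              rcases nbr_lit h₂ with h | ⟨s'', heq⟩ | ⟨_, _, _, heq⟩
              · cases h
              · injection heq with h1 h2
                subst h1
                exact absurd (congrArg Prod.fst hyt) (hx t')
              · cases heq
            · -- w1 = cl j', w2 = lit y t ∈ clause j : good case
              by_cases hyB : f (.lit y t) = f .b
              · rw [hs, (hclause j').1, hyB, hclj] at hc
                exact absurd hc (count_abab _ _ _)
              · refine ⟨t', ?_⟩
                rw [hyt]
                exact fin3_third (f .a) (f .b) (f .d) _ hAB hAD hBD (hlitne y t) hyB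
          | cons h₄ q =>
            simp only [Walk.length_cons] at hle
            omega
  -- assemble the assignment
  refine ⟨fun x => decide (f (.lit x true) = f .d), ?_⟩
  intro j
  obtain ⟨t, ht⟩ := hsat j
  refine ⟨t, ?_⟩
  cases hb : (Cl j t).2 with
  | false =>
    rw [hb] at ht
    have hne := prop (adjlitlit (Cl j t).1)
    rw [ht] at hne
    simpa using decide_eq_false hne
  | true =>
    rw [hb] at ht
    simpa using decide_eq_true ht
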